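/- In the quasilinear economy with goods I = {a, b, c, d}, six agents with valuations V1(x) = x_a + x_b + x_c + x_d, V2(x) = 3·min{x_a, x_b}, V3(x) = 3·min{x_b, x_c}, V4(x) = 3·min{x_c, x_d}, V5(x) = 3·min{x_d, x_a}, V6(x) = 3·min{x_a, x_b, x_c, x_d} on domains {0,1}^4, a competitive equilibrium exists for the total endowment (1,1,1,1): there exist p ∈ ℝ^4 and bundles x^1,...,x^6 ∈ {0,1}^4 summing to (1,1,1,1) with each x^j maximizing V^j(x) − p·x. -/

import Mathlib

def dot4 (p : Fin 4 → ℝ) (x : Fin 4 → ℕ) : ℝ := ∑ i, p i * (x i : ℝ)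

def W1 (x : Fin 4 → ℕ) : ℝ := (x 0 : ℝ) + (x 1 : ℝ) + (x 2 : ℝ) + (x 3 : ℝ)
def W2 (x : Fin 4 → ℕ) : ℝ := 3 * min (x 0 : ℝ) (x 1 : ℝ)
def W3 (x : Fin 4 → ℕ) : ℝ := 3 * min (x 1 : ℝ) (x 2 : ℝ)
def W4 (x : Fin 4 → ℕ) : ℝ := 3 * min (x 2 : ℝ) (x 3 : ℝ)
def W5 (x : Fin 4 → ℕ) : ℝ := 3 * min (x 3 : ℝ) (x 0 : ℝ)
def W6 (x : Fin 4 → ℕ) : ℝ := 3 * min (min (x 0 : ℝ) (x 1 : ℝ)) (min (x 2 : ℝ) (x 3 : ℝ))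

def Ws : Fin 6 → (Fin 4 → ℕ) → ℝ := ![W1, W2, W3, W4, W5, W6]

def xalloc : Fin 6 → Fin 4 → ℕ := fun j i =>
  if j.val = 1 ∧ (i.val = 0 ∨ i.val = 1) then 1 else if j.val = 3 ∧ (i.val = 2 ∨ i.val = 3) then 1 else 0

lemma Ws0 : Ws 0 = W1 := rfl
lemma Ws1 : Ws 1 = W2 := rfl
lemma Ws2 : Ws 2 = W3 := rfl
lemma Ws3 : Ws 3 = W4 := rfl
lemma Ws4 : Ws 4 = W5 := rfl
lemma Ws5 : Ws 5 = W6 := rfl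

/-- A competitive equilibrium exists in the economy of Example 3 (Danilov–Koshevoy–Lang). -/
theorem equilibrium_exists_dkl :
    ∃ (p : Fin 4 → ℝ) (x : Fin 6 → Fin 4 → ℕ),
      (∀ j i, x j i ≤ 1) ∧
      (∀ i, ∑ j, x j i = 1) ∧
      (∀ j, ∀ y : Fin 4 → ℕ, (∀ i, y i ≤ 1) →
        Ws j y - dot4 p y ≤ Ws j (x j) - dot4 p (x j)) := by
  refine ⟨fun _ => 3/2, xalloc, ?_, ?_, ?_⟩
  · decide
  · decide
  · intro j y hy
    have h0 : (y 0 : ℝ) ≤ 1 := by exact_mod_cast hy 0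
    have h1 : (y 1 : ℝ) ≤ 1 := by exact_mod_cast hy 1
    have h2 : (y 2 : ℝ) ≤ 1 := by exact_mod_cast hy 2
    have h3 : (y 3 : ℝ) ≤ 1 := by exact_mod_cast hy 3
    have n0 : (0:ℝ) ≤ (y 0 : ℝ) := Nat.cast_nonneg _
    have n1 : (0:ℝ) ≤ (y 1 : ℝ) := Nat.cast_nonneg _
    have n2 : (0:ℝ) ≤ (y 2 : ℝ) := Nat.cast_nonneg _
    have n3 : (0:ℝ) ≤ (y 3 : ℝ) := Nat.cast_nonneg _
    have m01a := min_le_left (y 0 : ℝ) (y 1 : ℝ)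
    have m01b := min_le_right (y 0 : ℝ) (y 1 : ℝ)
    have m12a := min_le_left (y 1 : ℝ) (y 2 : ℝ)
    have m12b := min_le_right (y 1 : ℝ) (y 2 : ℝ)
    have m23a := min_le_left (y 2 : ℝ) (y 3 : ℝ)
    have m23b := min_le_right (y 2 : ℝ) (y 3 : ℝ)
    have m30a := min_le_left (y 3 : ℝ) (y 0 : ℝ)
    have m30b := min_le_right (y 3 : ℝ) (y 0 : ℝ)
    have m6a := (min_le_left (min (y 0 : ℝ) (y 1 : ℝ)) (min (y 2 : ℝ) (y 3 : ℝ))).trans m01a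
    have m6b := (min_le_left (min (y 0 : ℝ) (y 1 : ℝ)) (min (y 2 : ℝ) (y 3 : ℝ))).trans m01b
    have m6c := (min_le_right (min (y 0 : ℝ) (y 1 : ℝ)) (min (y 2 : ℝ) (y 3 : ℝ))).trans m23a
    have m6d := (min_le_right (min (y 0 : ℝ) (y 1 : ℝ)) (min (y 2 : ℝ) (y 3 : ℝ))).trans m23b
    fin_cases j <;>
      simp [Ws0, Ws1, Ws2, Ws3, Ws4, Ws5, W1, W2, W3, W4, W5, W6, dot4, xalloc, Fin.sum_univ_four, Fin.ext_iff,
        show ((2:Fin 4)).val = 2 from rfl, show ((3:Fin 4)).val = 3 from rfl, Matrix.vecHead, Matrix.vecTail,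
        show ((1:Fin 6)).val = 1 from rfl, show ((2:Fin 6)).val = 2 from rfl,
        show ((3:Fin 6)).val = 3 from rfl, show ((4:Fin 6)).val = 4 from rfl,
        show ((5:Fin 6)).val = 5 from rfl, -Fin.val_eq_zero_iff] <;>
      linarith
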